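/- Let L be an e-cyclic residuated lattice and let P ≠ L be a prime convex subalgebra of L. Then the following are equivalent: (1) P is a minimal prime convex subalgebra of L; (2) for all x ∈ L, x ∈ P implies x^⊥ ⊈ P; (3) P = ⋃{x^⊥ : x ∈ L \ P}. -/

import Mathlib

universe u

/-- A residuated lattice: a lattice-ordered monoid with left and right residuals.
`ldiv x z` is `x \ z` and `rdiv z y` is `z / y`. -/
class ResiduatedLattice (α : Type u) extends Lattice α, Monoid α where
  ldiv : α → α → α
  rdiv : α → α → α
  mul_le_iff_le_ldiv : ∀ x y z : α, x * y ≤ z ↔ y ≤ ldiv x z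
  mul_le_iff_le_rdiv : ∀ x y z : α, x * y ≤ z ↔ x ≤ rdiv z y

namespace ResiduatedLattice

variable {α : Type u} [ResiduatedLattice α]

/-- `L` is e-cyclic if `x \ e = e / x` for all `x`. -/
def ECyclic (α : Type u) [ResiduatedLattice α] : Prop :=
  ∀ x : α, ldiv x 1 = rdiv 1 x

/-- Absolute value: `|x| = x ⊓ (e / x) ⊓ e`. -/
def absv (x : α) : α := x ⊓ rdiv 1 x ⊓ 1

/-- A convex subalgebra: contains `e`, closed under all the operations, and order-convex. -/
structure IsConvexSubalgebra (H : Set α) : Prop where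
  one_mem : (1 : α) ∈ H
  mul_mem : ∀ ⦃x⦄, x ∈ H → ∀ ⦃y⦄, y ∈ H → x * y ∈ H
  sup_mem : ∀ ⦃x⦄, x ∈ H → ∀ ⦃y⦄, y ∈ H → x ⊔ y ∈ H
  inf_mem : ∀ ⦃x⦄, x ∈ H → ∀ ⦃y⦄, y ∈ H → x ⊓ y ∈ H
  ldiv_mem : ∀ ⦃x⦄, x ∈ H → ∀ ⦃y⦄, y ∈ H → ldiv x y ∈ H
  rdiv_mem : ∀ ⦃x⦄, x ∈ H → ∀ ⦃y⦄, y ∈ H → rdiv x y ∈ H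
  convex : ∀ ⦃a⦄, a ∈ H → ∀ ⦃b⦄, b ∈ H → ∀ ⦃x⦄, a ≤ x → x ≤ b → x ∈ H

/-- `C[S]`: the smallest convex subalgebra containing `S`. -/
def convexClosure (S : Set α) : Set α :=
  ⋂₀ {H : Set α | IsConvexSubalgebra H ∧ S ⊆ H}

end ResiduatedLattice

open ResiduatedLattice

/-- A prime convex subalgebra: a convex subalgebra that is meet-irreducible in the
lattice of convex subalgebras. -/
def IsPrimeConvex {α : Type u} [ResiduatedLattice α] (H : Set α) : Prop :=
  IsConvexSubalgebra H ∧
  ∀ X Y : Set α, IsConvexSubalgebra X → IsConvexSubalgebra Y →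
    X ∩ Y ⊆ H → X ⊆ H ∨ Y ⊆ H

/-- A minimal prime convex subalgebra. -/
def IsMinimalPrimeConvex {α : Type u} [ResiduatedLattice α] (P : Set α) : Prop :=
  IsPrimeConvex P ∧ P ≠ Set.univ ∧
  ∀ Q : Set α, IsPrimeConvex Q → Q ≠ Set.univ → Q ⊆ P → Q = P

/-- The polar `S^⊥ = {a : |a| ⊔ |s| = e for all s ∈ S}`. -/
def polar {α : Type u} [ResiduatedLattice α] (S : Set α) : Set α :=
  {a : α | ∀ s ∈ S, absv a ⊔ absv s = 1}

section Aux

namespace ResiduatedLattice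

variable {α : Type u} [ResiduatedLattice α]

lemma le_ldiv {x y z : α} (h : x * y ≤ z) : y ≤ ldiv x z :=
  (mul_le_iff_le_ldiv x y z).mp h

lemma ldiv_le {x y z : α} (h : y ≤ ldiv x z) : x * y ≤ z :=
  (mul_le_iff_le_ldiv x y z).mpr h

lemma le_rdiv {x y z : α} (h : x * y ≤ z) : x ≤ rdiv z y :=
  (mul_le_iff_le_rdiv x y z).mp h

lemma rdiv_le {x y z : α} (h : x ≤ rdiv z y) : x * y ≤ z :=
  (mul_le_iff_le_rdiv x y z).mpr h

lemma mul_ldiv_le (x z : α) : x * ldiv x z ≤ z := ldiv_le le_rfl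

lemma rdiv_mul_le (z y : α) : rdiv z y * y ≤ z := rdiv_le le_rfl

lemma mul_le_mul_left' {b c : α} (h : b ≤ c) (a : α) : a * b ≤ a * c :=
  ldiv_le (h.trans (le_ldiv le_rfl))

lemma mul_le_mul_right' {b c : α} (h : b ≤ c) (a : α) : b * a ≤ c * a :=
  rdiv_le (h.trans (le_rdiv le_rfl))

lemma mul_le_mul'' {a b c d : α} (h1 : a ≤ b) (h2 : c ≤ d) : a * c ≤ b * d :=
  (mul_le_mul_left' h2 a).trans (mul_le_mul_right' h1 d)

lemma mul_le_of_le_one_left {a b : α} (ha : a ≤ 1) : a * b ≤ b := by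
  simpa using mul_le_mul_right' ha b

lemma mul_le_of_le_one_right {a b : α} (hb : b ≤ 1) : a * b ≤ a := by
  simpa using mul_le_mul_left' hb a

lemma mul_le_one' {a b : α} (ha : a ≤ 1) (hb : b ≤ 1) : a * b ≤ 1 :=
  (mul_le_of_le_one_right hb).trans ha

lemma mul_sup' (a b c : α) : a * (b ⊔ c) = a * b ⊔ a * c := by
  apply le_antisymm
  · apply ldiv_le
    exact sup_le (le_ldiv le_sup_left) (le_ldiv le_sup_right)
  · exact sup_le (mul_le_mul_left' le_sup_left a) (mul_le_mul_left' le_sup_right a)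

lemma sup_mul' (a b c : α) : (b ⊔ c) * a = b * a ⊔ c * a := by
  apply le_antisymm
  · apply rdiv_le
    exact sup_le (le_rdiv le_sup_left) (le_rdiv le_sup_right)
  · exact sup_le (mul_le_mul_right' le_sup_left a) (mul_le_mul_right' le_sup_right a)

lemma pow_le_one' {a : α} (ha : a ≤ 1) : ∀ n, a ^ n ≤ 1
  | 0 => by simp
  | n + 1 => by rw [pow_succ]; exact mul_le_one' (pow_le_one' ha n) ha

lemma pow_le_pow_of_le {a : α} (ha : a ≤ 1) {m n : ℕ} (h : m ≤ n) : a ^ n ≤ a ^ m := by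
  obtain ⟨k, rfl⟩ := Nat.exists_eq_add_of_le h
  rw [pow_add]
  exact mul_le_of_le_one_right (pow_le_one' ha k)

lemma pow_le_pow_left'' {a b : α} (h : a ≤ b) : ∀ n, a ^ n ≤ b ^ n
  | 0 => by simp
  | n + 1 => by rw [pow_succ, pow_succ]; exact mul_le_mul'' (pow_le_pow_left'' h n) h

lemma absv_le_self (a : α) : absv a ≤ a := inf_le_left.trans inf_le_left

lemma absv_le_one (a : α) : absv a ≤ 1 := inf_le_right

lemma absv_le_rdiv (a : α) : absv a ≤ rdiv 1 a := inf_le_left.trans inf_le_right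

lemma absv_mul_self_le_one (a : α) : absv a * a ≤ 1 := rdiv_le (absv_le_rdiv a)

lemma self_mul_absv_le_one (hec : ECyclic α) (a : α) : a * absv a ≤ 1 := by
  apply ldiv_le
  rw [hec a]
  exact absv_le_rdiv a

lemma le_absv {u a : α} (h1 : u ≤ a) (h2 : u * a ≤ 1) (h3 : u ≤ 1) : u ≤ absv a :=
  le_inf (le_inf h1 (le_rdiv h2)) h3

lemma absv_one : absv (1 : α) = 1 := by
  apply le_antisymm (absv_le_one 1)
  exact le_absv le_rfl (by simp) le_rfl

lemma eq_one_of_absv_eq_one {a : α} (h : absv a = 1) : a = 1 := by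
  have h1 : (1 : α) ≤ a := h ▸ absv_le_self a
  have h2 : (1 : α) ≤ rdiv 1 a := h ▸ absv_le_rdiv a
  have : a ≤ 1 := by simpa using rdiv_le h2
  exact le_antisymm this h1

lemma sq_le_absv {a : α} (ha : a ≤ 1) : a * a ≤ absv a :=
  le_absv (mul_le_of_le_one_left ha) (mul_le_one' (mul_le_one' ha ha) ha) (mul_le_one' ha ha)

end ResiduatedLattice

end Aux
section Aux2

namespace ResiduatedLattice

variable {α : Type u} [ResiduatedLattice α]

/-- `|a||b||a| ≤ |ab|`. -/
lemma aba_le_absv_mul (a b : α) : absv a * absv b * absv a ≤ absv (a * b) := by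
  apply le_absv
  · calc absv a * absv b * absv a ≤ a * b * 1 :=
          mul_le_mul'' (mul_le_mul'' (absv_le_self a) (absv_le_self b)) (absv_le_one a)
      _ = a * b := by rw [mul_one]
  · calc absv a * absv b * absv a * (a * b)
        = absv a * (absv b * ((absv a * a) * b)) := by simp [mul_assoc]
      _ ≤ absv a * (absv b * (1 * b)) := by
          exact mul_le_mul_left' (mul_le_mul_left' (mul_le_mul_right' (absv_mul_self_le_one a) b) _) _
      _ = absv a * (absv b * b) := by rw [one_mul]
      _ ≤ absv a * 1 := mul_le_mul_left' (absv_mul_self_le_one b) _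
      _ ≤ 1 := by rw [mul_one]; exact absv_le_one a
  · exact mul_le_one' (mul_le_one' (absv_le_one a) (absv_le_one b)) (absv_le_one a)

/-- `|a||b| ≤ |z|` whenever `a ≤ z ≤ b`. -/
lemma ab_le_absv_between {a b z : α} (h1 : a ≤ z) (h2 : z ≤ b) :
    absv a * absv b ≤ absv z := by
  apply le_absv
  · exact (mul_le_of_le_one_right (absv_le_one b)).trans ((absv_le_self a).trans h1)
  · calc absv a * absv b * z ≤ absv a * (absv b * b) := by
          rw [mul_assoc]; exact mul_le_mul_left' (mul_le_mul_left' h2 _) _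
      _ ≤ absv a * 1 := mul_le_mul_left' (absv_mul_self_le_one b) _
      _ ≤ 1 := by rw [mul_one]; exact absv_le_one a
  · exact mul_le_one' (absv_le_one a) (absv_le_one b)

lemma ab_le_absv_inf (a b : α) : absv a * absv b ≤ absv (a ⊓ b) := by
  apply le_absv
  · exact le_inf ((mul_le_of_le_one_right (absv_le_one b)).trans (absv_le_self a))
      ((mul_le_of_le_one_left (absv_le_one a)).trans (absv_le_self b))
  · calc absv a * absv b * (a ⊓ b) ≤ absv a * (absv b * b) := by
          rw [mul_assoc]; exact mul_le_mul_left' (mul_le_mul_left' inf_le_right _) _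
      _ ≤ absv a * 1 := mul_le_mul_left' (absv_mul_self_le_one b) _
      _ ≤ 1 := by rw [mul_one]; exact absv_le_one a
  · exact mul_le_one' (absv_le_one a) (absv_le_one b)

lemma ab_le_absv_sup (a b : α) : absv a * absv b ≤ absv (a ⊔ b) := by
  apply le_absv
  · exact (mul_le_of_le_one_right (absv_le_one b)).trans ((absv_le_self a).trans le_sup_left)
  · rw [mul_sup']
    apply sup_le
    · calc absv a * absv b * a ≤ absv a * (1 * a) := by
            rw [mul_assoc]; exact mul_le_mul_left' (mul_le_mul_right' (absv_le_one b) a) _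
        _ = absv a * a := by rw [one_mul]
        _ ≤ 1 := absv_mul_self_le_one a
    · calc absv a * absv b * b ≤ absv a * (absv b * b) := by rw [mul_assoc]
        _ ≤ absv a * 1 := mul_le_mul_left' (absv_mul_self_le_one b) _
        _ ≤ 1 := by rw [mul_one]; exact absv_le_one a
  · exact mul_le_one' (absv_le_one a) (absv_le_one b)

lemma aba_le_ab (a b : α) : absv a * absv b * absv a ≤ absv a * absv b :=
  mul_le_of_le_one_right (absv_le_one a)

/-- `|a||b||a| ≤ |a\b|`, using e-cyclicity. -/
lemma aba_le_absv_ldiv (hec : ECyclic α) (a b : α) :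
    absv a * absv b * absv a ≤ absv (ldiv a b) := by
  apply le_absv
  · apply le_ldiv
    calc a * (absv a * absv b * absv a) = (a * absv a) * (absv b * absv a) := by
          simp [mul_assoc]
      _ ≤ 1 * (absv b * absv a) := mul_le_mul_right' (self_mul_absv_le_one hec a) _
      _ = absv b * absv a := by rw [one_mul]
      _ ≤ b * 1 := mul_le_mul'' (absv_le_self b) (absv_le_one a)
      _ = b := by rw [mul_one]
  · calc absv a * absv b * absv a * ldiv a b
        = absv a * (absv b * (absv a * ldiv a b)) := by simp [mul_assoc]
      _ ≤ absv a * (absv b * (a * ldiv a b)) := by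
          exact mul_le_mul_left' (mul_le_mul_left' (mul_le_mul_right' (absv_le_self a) _) _) _
      _ ≤ absv a * (absv b * b) := mul_le_mul_left' (mul_le_mul_left' (mul_ldiv_le a b) _) _
      _ ≤ absv a * 1 := mul_le_mul_left' (absv_mul_self_le_one b) _
      _ ≤ 1 := by rw [mul_one]; exact absv_le_one a
  · exact mul_le_one' (mul_le_one' (absv_le_one a) (absv_le_one b)) (absv_le_one a)

/-- `|a||b||a| ≤ |b/a|`, using e-cyclicity. -/
lemma aba_le_absv_rdiv (hec : ECyclic α) (a b : α) :
    absv a * absv b * absv a ≤ absv (rdiv b a) := by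
  apply le_absv
  · apply le_rdiv
    calc absv a * absv b * absv a * a = absv a * absv b * (absv a * a) := by rw [mul_assoc]
      _ ≤ absv a * absv b * 1 := mul_le_mul_left' (absv_mul_self_le_one a) _
      _ = absv a * absv b := by rw [mul_one]
      _ ≤ 1 * b := mul_le_mul'' (absv_le_one a) (absv_le_self b)
      _ = b := by rw [one_mul]
  · have h1 : absv b * rdiv b a ≤ ldiv a 1 := by
      rw [hec a]
      apply le_rdiv
      calc absv b * rdiv b a * a = absv b * (rdiv b a * a) := by rw [mul_assoc]
        _ ≤ absv b * b := mul_le_mul_left' (rdiv_mul_le b a) _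
        _ ≤ 1 := absv_mul_self_le_one b
    calc absv a * absv b * absv a * rdiv b a
        = absv a * (absv b * (absv a * rdiv b a)) := by simp [mul_assoc]
      _ ≤ absv a * (absv b * (1 * rdiv b a)) := by
          exact mul_le_mul_left' (mul_le_mul_left' (mul_le_mul_right' (absv_le_one a) _) _) _
      _ = absv a * (absv b * rdiv b a) := by rw [one_mul]
      _ ≤ absv a * ldiv a 1 := mul_le_mul_left' h1 _
      _ ≤ a * ldiv a 1 := mul_le_mul_right' (absv_le_self a) _
      _ ≤ 1 := mul_ldiv_le a 1
  · exact mul_le_one' (mul_le_one' (absv_le_one a) (absv_le_one b)) (absv_le_one a)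

/-- For `u, v ≤ 1`: `(u ⊔ v)^(m+n) ≤ u^m ⊔ v^n`. -/
lemma sup_pow_le {u v : α} (hu : u ≤ 1) (hv : v ≤ 1) :
    ∀ m n : ℕ, (u ⊔ v) ^ (m + n) ≤ u ^ m ⊔ v ^ n := by
  intro m
  induction m with
  | zero =>
    intro n
    simp only [Nat.zero_add, pow_zero]
    exact le_sup_of_le_left (pow_le_one' (sup_le hu hv) n)
  | succ m ih =>
    intro n
    induction n with
    | zero =>
      simp only [Nat.add_zero, pow_zero]
      exact le_sup_of_le_right (pow_le_one' (sup_le hu hv) (m + 1))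
    | succ n ihn =>
      have hE : m + 1 + (n + 1) = (m + (n + 1)) + 1 := by ring
      rw [hE, pow_succ', sup_mul']
      apply sup_le
      · calc u * (u ⊔ v) ^ (m + (n + 1)) ≤ u * (u ^ m ⊔ v ^ (n + 1)) :=
              mul_le_mul_left' (ih (n + 1)) u
          _ = u * u ^ m ⊔ u * v ^ (n + 1) := mul_sup' _ _ _
          _ ≤ u ^ (m + 1) ⊔ v ^ (n + 1) := by
              apply sup_le
              · rw [← pow_succ']; exact le_sup_left
              · exact le_sup_of_le_right (mul_le_of_le_one_left hu)
      · have hE2 : m + (n + 1) = (m + 1) + n := by ring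
        calc v * (u ⊔ v) ^ (m + (n + 1)) ≤ v * (u ^ (m + 1) ⊔ v ^ n) := by
              rw [hE2]; exact mul_le_mul_left' ihn v
          _ = v * u ^ (m + 1) ⊔ v * v ^ n := mul_sup' _ _ _
          _ ≤ u ^ (m + 1) ⊔ v ^ (n + 1) := by
              apply sup_le
              · exact le_sup_of_le_left (mul_le_of_le_one_left hv)
              · rw [← pow_succ']; exact le_sup_right

end ResiduatedLattice

end Aux2
section Aux3

namespace ResiduatedLattice

variable {α : Type u} [ResiduatedLattice α]

lemma IsConvexSubalgebra.absv_mem {H : Set α} (hH : IsConvexSubalgebra H)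
    {z : α} (hz : z ∈ H) : absv z ∈ H :=
  hH.inf_mem (hH.inf_mem hz (hH.rdiv_mem hH.one_mem hz)) hH.one_mem

lemma IsConvexSubalgebra.mem_of_absv_mem {H : Set α} (hH : IsConvexSubalgebra H)
    {z : α} (hz : absv z ∈ H) : z ∈ H := by
  have h1 : z ≤ ldiv (absv z) 1 := le_ldiv (absv_mul_self_le_one z)
  exact hH.convex hz (hH.ldiv_mem hz hH.one_mem) (absv_le_self z) h1

lemma IsConvexSubalgebra.mem_of_between {H : Set α} (hH : IsConvexSubalgebra H)
    {h z : α} (hh : h ∈ H) (h1 : h ≤ z) (h2 : z ≤ 1) : z ∈ H :=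
  hH.convex hh hH.one_mem h1 h2

lemma IsConvexSubalgebra.pow_mem {H : Set α} (hH : IsConvexSubalgebra H)
    {z : α} (hz : z ∈ H) : ∀ n, z ^ n ∈ H
  | 0 => by simpa using hH.one_mem
  | n + 1 => by rw [pow_succ]; exact hH.mul_mem (hH.pow_mem hz n) hz

lemma mem_polar_singleton {a y : α} : a ∈ polar {y} ↔ absv a ⊔ absv y = 1 := by
  simp [polar]

lemma polar_singleton_comm {a y : α} (h : a ∈ polar {y}) : y ∈ polar {a} := by
  rw [mem_polar_singleton] at h ⊢
  rwa [sup_comm]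

/-- `(c ⊔ y)(d ⊔ y) ≤ cd ⊔ y` for `c, d, y ≤ 1`. -/
lemma sup_mul_sup_le {c d y : α} (hc : c ≤ 1) (hd : d ≤ 1) (hy : y ≤ 1) :
    (c ⊔ y) * (d ⊔ y) ≤ c * d ⊔ y := by
  rw [sup_mul', mul_sup', mul_sup']
  apply sup_le
  · exact sup_le le_sup_left (le_sup_of_le_right (mul_le_of_le_one_left hc))
  · exact sup_le (le_sup_of_le_right (mul_le_of_le_one_right hd))
      (le_sup_of_le_right (mul_le_of_le_one_right hy))

/-- If `|a||b||a| ≤ w ≤ 1` and `a, b ∈ y^⊥` then `w ⊔ |y| = 1`. -/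
lemma polar_key {a b y w : α} (ha : absv a ⊔ absv y = 1) (hb : absv b ⊔ absv y = 1)
    (hw : absv a * absv b * absv a ≤ w) (hw1 : w ≤ 1) : w ⊔ absv y = 1 := by
  apply le_antisymm (sup_le hw1 (absv_le_one y))
  have h1 : (1 : α) = (absv a ⊔ absv y) * (absv b ⊔ absv y) * (absv a ⊔ absv y) := by
    rw [ha, hb, mul_one, mul_one]
  rw [h1]
  calc (absv a ⊔ absv y) * (absv b ⊔ absv y) * (absv a ⊔ absv y)
      ≤ (absv a * absv b ⊔ absv y) * (absv a ⊔ absv y) :=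
        mul_le_mul_right' (sup_mul_sup_le (absv_le_one a) (absv_le_one b) (absv_le_one y)) _
    _ ≤ (absv a * absv b) * absv a ⊔ absv y :=
        sup_mul_sup_le (mul_le_one' (absv_le_one a) (absv_le_one b)) (absv_le_one a) (absv_le_one y)
    _ ≤ w ⊔ absv y := sup_le (le_sup_of_le_left hw) le_sup_right

/-- Polars of singletons are convex subalgebras (e-cyclicity needed). -/
theorem polar_singleton_isConvex (hec : ECyclic α) (y : α) :
    IsConvexSubalgebra (polar {y}) := by
  constructor
  · rw [mem_polar_singleton, absv_one]
    exact sup_eq_left.mpr (absv_le_one y)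
  · intro a ha b hb
    rw [mem_polar_singleton] at ha hb ⊢
    exact polar_key ha hb (aba_le_absv_mul a b) (absv_le_one _)
  · intro a ha b hb
    rw [mem_polar_singleton] at ha hb ⊢
    exact polar_key ha hb ((aba_le_ab a b).trans (ab_le_absv_sup a b)) (absv_le_one _)
  · intro a ha b hb
    rw [mem_polar_singleton] at ha hb ⊢
    exact polar_key ha hb ((aba_le_ab a b).trans (ab_le_absv_inf a b)) (absv_le_one _)
  · intro a ha b hb
    rw [mem_polar_singleton] at ha hb ⊢
    exact polar_key ha hb (aba_le_absv_ldiv hec a b) (absv_le_one _)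
  · intro a ha b hb
    rw [mem_polar_singleton] at ha hb ⊢
    exact polar_key hb ha (aba_le_absv_rdiv hec b a) (absv_le_one _)
  · intro a ha b hb z h1 h2
    rw [mem_polar_singleton] at ha hb ⊢
    exact polar_key ha hb ((aba_le_ab a b).trans (ab_le_absv_between h1 h2)) (absv_le_one _)

end ResiduatedLattice

end Aux3
section Aux4

namespace ResiduatedLattice

variable {α : Type u} [ResiduatedLattice α]

/-- The convex subalgebra generated by `Q ∪ {u}` (for `Q` a convex subalgebra, `u ≤ 1`). -/
def genSub (Q : Set α) (u : α) : Set α :=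
  {z : α | ∃ v ∈ Q, v ≤ 1 ∧ ∃ n : ℕ, (v * u) ^ (n + 1) ≤ absv z}

lemma subset_genSub {Q : Set α} (hQ : IsConvexSubalgebra Q) {u : α} (hu : u ≤ 1) :
    Q ⊆ genSub Q u := by
  intro q hq
  refine ⟨absv q, hQ.absv_mem hq, absv_le_one q, 0, ?_⟩
  rw [pow_one]
  exact mul_le_of_le_one_right hu

lemma mem_genSub_self {Q : Set α} (hQ : IsConvexSubalgebra Q) {u : α} (hu : u ≤ 1) :
    u ∈ genSub Q u :=
  ⟨1, hQ.one_mem, le_rfl, 1, by rw [one_mul, pow_succ, pow_one]; exact sq_le_absv hu⟩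

theorem genSub_isConvex (hec : ECyclic α) {Q : Set α} (hQ : IsConvexSubalgebra Q)
    {u : α} (hu : u ≤ 1) : IsConvexSubalgebra (genSub Q u) := by
  -- common witness for two members
  have key : ∀ {z1 z2 : α},
      z1 ∈ genSub Q u → z2 ∈ genSub Q u →
      ∃ v ∈ Q, v ≤ 1 ∧ ∃ m n : ℕ,
        (v * u) ^ (m + 1) ≤ absv z1 ∧ (v * u) ^ (n + 1) ≤ absv z2 := by
    rintro z1 z2 ⟨v1, hv1, hv1le, m, hm⟩ ⟨v2, hv2, hv2le, n, hn⟩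
    refine ⟨v1 * v2, hQ.mul_mem hv1 hv2, mul_le_one' hv1le hv2le, m, n, ?_, ?_⟩
    · refine le_trans (pow_le_pow_left'' ?_ (m + 1)) hm
      rw [mul_assoc]
      exact mul_le_mul_left' (mul_le_of_le_one_left hv2le) v1
    · refine le_trans (pow_le_pow_left'' ?_ (n + 1)) hn
      exact mul_le_mul_right' (mul_le_of_le_one_left hv1le) u
  have wle : ∀ {v : α}, v ≤ 1 → v * u ≤ 1 := fun hv => mul_le_one' hv hu
  -- combine three powers
  have tri : ∀ {w t1 t2 : α} {m n : ℕ}, w ≤ 1 → (w ^ (m + 1) ≤ t1) → (w ^ (n + 1) ≤ t2) →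
      (w ^ ((m + n + m + 2) + 1) ≤ t1 * t2 * t1) := by
    intro w t1 t2 m n hw h1 h2
    have : (m + n + m + 2) + 1 = (m + 1) + (n + 1) + (m + 1) := by ring
    rw [this, pow_add, pow_add]
    exact mul_le_mul'' (mul_le_mul'' h1 h2) h1
  have duo : ∀ {w t1 t2 : α} {m n : ℕ}, (w ^ (m + 1) ≤ t1) → (w ^ (n + 1) ≤ t2) →
      (w ^ ((m + n + 1) + 1) ≤ t1 * t2) := by
    intro w t1 t2 m n h1 h2
    have : (m + n + 1) + 1 = (m + 1) + (n + 1) := by ring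
    rw [this, pow_add]
    exact mul_le_mul'' h1 h2
  constructor
  · exact ⟨1, hQ.one_mem, le_rfl, 0, by rw [one_mul, pow_one, absv_one]; exact hu⟩
  · intro z1 h1 z2 h2
    obtain ⟨v, hv, hvle, m, n, hm, hn⟩ := key h1 h2
    exact ⟨v, hv, hvle, m + n + m + 2,
      (tri (wle hvle) hm hn).trans (aba_le_absv_mul z1 z2)⟩
  · intro z1 h1 z2 h2
    obtain ⟨v, hv, hvle, m, n, hm, hn⟩ := key h1 h2
    exact ⟨v, hv, hvle, m + n + 1, (duo hm hn).trans (ab_le_absv_sup z1 z2)⟩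
  · intro z1 h1 z2 h2
    obtain ⟨v, hv, hvle, m, n, hm, hn⟩ := key h1 h2
    exact ⟨v, hv, hvle, m + n + 1, (duo hm hn).trans (ab_le_absv_inf z1 z2)⟩
  · intro z1 h1 z2 h2
    obtain ⟨v, hv, hvle, m, n, hm, hn⟩ := key h1 h2
    exact ⟨v, hv, hvle, m + n + m + 2,
      (tri (wle hvle) hm hn).trans (aba_le_absv_ldiv hec z1 z2)⟩
  · intro z1 h1 z2 h2
    obtain ⟨v, hv, hvle, m, n, hm, hn⟩ := key h1 h2
    exact ⟨v, hv, hvle, n + m + n + 2,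
      (tri (wle hvle) hn hm).trans (aba_le_absv_rdiv hec z2 z1)⟩
  · intro a ha b hb z h1 h2
    obtain ⟨v, hv, hvle, m, n, hm, hn⟩ := key ha hb
    exact ⟨v, hv, hvle, m + n + 1, (duo hm hn).trans (ab_le_absv_between h1 h2)⟩

end ResiduatedLattice

end Aux4
section Aux5

namespace ResiduatedLattice

variable {α : Type u} [ResiduatedLattice α]

lemma one_isConvex : IsConvexSubalgebra ({1} : Set α) := by
  have hld : ldiv (1 : α) 1 = 1 := by
    apply le_antisymm
    · have := mul_ldiv_le (1 : α) 1
      rwa [one_mul] at this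
    · exact le_ldiv (by rw [one_mul])
  have hrd : rdiv (1 : α) 1 = 1 := by
    apply le_antisymm
    · have := rdiv_mul_le (1 : α) 1
      rwa [mul_one] at this
    · exact le_rdiv (by rw [one_mul])
  constructor <;> simp_all [Set.mem_singleton_iff]
  intro a h1 h2
  exact le_antisymm h2 h1

/-- Primality implies the element-wise splitting criterion. -/
lemma crit_of_prime (hec : ECyclic α) {P : Set α} (hP : IsPrimeConvex P)
    {u v : α} (hu : u ≤ 1) (hv : v ≤ 1) (huv : u ⊔ v ∈ P) : u ∈ P ∨ v ∈ P := by
  obtain ⟨hPc, hprime⟩ := hP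
  have hX := genSub_isConvex hec one_isConvex hu
  have hY := genSub_isConvex hec one_isConvex hv
  have hsub : genSub {1} u ∩ genSub {1} v ⊆ P := by
    rintro z ⟨⟨v1, hv1, -, m, hm⟩, ⟨v2, hv2, -, n, hn⟩⟩
    rw [Set.mem_singleton_iff] at hv1 hv2
    subst hv1; subst hv2
    rw [one_mul] at hm hn
    have hword : (u ⊔ v) ^ ((m + 1) + (n + 1)) ≤ absv z :=
      (sup_pow_le hu hv (m + 1) (n + 1)).trans (sup_le hm hn)
    have hmem : (u ⊔ v) ^ ((m + 1) + (n + 1)) ∈ P := hPc.pow_mem huv _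
    exact hPc.mem_of_absv_mem (hPc.convex hmem hPc.one_mem hword (absv_le_one z))
  rcases hprime _ _ hX hY hsub with h | h
  · exact Or.inl (h (mem_genSub_self one_isConvex hu))
  · exact Or.inr (h (mem_genSub_self one_isConvex hv))

/-- The splitting criterion implies primality. -/
lemma prime_of_crit {Q : Set α} (hQc : IsConvexSubalgebra Q)
    (hcrit : ∀ u v : α, u ≤ 1 → v ≤ 1 → u ⊔ v ∈ Q → u ∈ Q ∨ v ∈ Q) :
    IsPrimeConvex Q := by
  refine ⟨hQc, fun X Y hX hY hXY => ?_⟩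
  by_contra hcon
  push_neg at hcon
  obtain ⟨hXn, hYn⟩ := hcon
  obtain ⟨a, haX, haQ⟩ := Set.not_subset.mp hXn
  obtain ⟨b, hbY, hbQ⟩ := Set.not_subset.mp hYn
  have haX' : absv a ∈ X := hX.absv_mem haX
  have hbY' : absv b ∈ Y := hY.absv_mem hbY
  have hsupX : absv a ⊔ absv b ∈ X :=
    hX.mem_of_between haX' le_sup_left (sup_le (absv_le_one a) (absv_le_one b))
  have hsupY : absv a ⊔ absv b ∈ Y :=
    hY.mem_of_between hbY' le_sup_right (sup_le (absv_le_one a) (absv_le_one b))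
  rcases hcrit _ _ (absv_le_one a) (absv_le_one b) (hXY ⟨hsupX, hsupY⟩) with h | h
  · exact haQ (hQc.mem_of_absv_mem h)
  · exact hbQ (hQc.mem_of_absv_mem h)

/-- For a prime `P` and `y ∉ P`, the polar `y^⊥` is contained in `P`. -/
lemma polar_subset_of_prime (hec : ECyclic α) {P : Set α} (hP : IsPrimeConvex P)
    {y : α} (hy : y ∉ P) : polar {y} ⊆ P := by
  obtain ⟨hPc, hprime⟩ := hP
  have hX := polar_singleton_isConvex hec y
  have hY := genSub_isConvex hec one_isConvex (absv_le_one y)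
  have hsub : polar {y} ∩ genSub {1} (absv y) ⊆ P := by
    rintro z ⟨hz1, ⟨v1, hv1, -, n, hn⟩⟩
    rw [Set.mem_singleton_iff] at hv1
    subst hv1
    rw [one_mul] at hn
    rw [mem_polar_singleton] at hz1
    have h1 : (1 : α) ≤ absv z := by
      calc (1 : α) = (absv z ⊔ absv y) ^ (1 + (n + 1)) := by rw [hz1, one_pow]
        _ ≤ absv z ^ 1 ⊔ absv y ^ (n + 1) :=
            sup_pow_le (absv_le_one z) (absv_le_one y) 1 (n + 1)
        _ ≤ absv z := by rw [pow_one]; exact sup_le le_rfl hn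
    have : absv z = 1 := le_antisymm (absv_le_one z) h1
    rw [eq_one_of_absv_eq_one this]
    exact hPc.one_mem
  rcases hprime _ _ hX hY hsub with h | h
  · exact h
  · exact absurd (h ⟨1, one_isConvex.one_mem, le_rfl, 0, by rw [one_mul, pow_one]⟩) hy

end ResiduatedLattice

end Aux5
section Aux6

namespace ResiduatedLattice

variable {α : Type u} [ResiduatedLattice α]

/-- Elements generated from `G` by products and joins. -/
inductive InPi (G : Set α) : α → Prop
  | base {g : α} : g ∈ G → InPi G g
  | mul {a b : α} : InPi G a → InPi G b → InPi G (a * b)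
  | sup {a b : α} : InPi G a → InPi G b → InPi G (a ⊔ b)

/-- Joins of elements lying below absolute values of elements outside `P`. -/
inductive IsJM (P : Set α) : α → Prop
  | mix {y m : α} : y ∉ P → m ≤ absv y → IsJM P m
  | sup {a b : α} : IsJM P a → IsJM P b → IsJM P (a ⊔ b)

lemma IsJM.le_one {P : Set α} {r : α} (h : IsJM P r) : r ≤ 1 := by
  induction h with
  | mix hy hm => exact hm.trans (absv_le_one _)
  | sup _ _ ih1 ih2 => exact sup_le ih1 ih2

lemma IsJM.mul_left {P : Set α} {r : α} (h : IsJM P r) {c : α} (hc : c ≤ 1) :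
    IsJM P (c * r) := by
  induction h with
  | mix hy hm => exact IsJM.mix hy ((mul_le_of_le_one_left hc).trans hm)
  | sup h1 h2 ih1 ih2 => rw [mul_sup']; exact IsJM.sup ih1 ih2

lemma IsJM.mul_right {P : Set α} {r : α} (h : IsJM P r) {c : α} (hc : c ≤ 1) :
    IsJM P (r * c) := by
  induction h with
  | mix hy hm => exact IsJM.mix hy ((mul_le_of_le_one_right hc).trans hm)
  | sup h1 h2 ih1 ih2 => rw [sup_mul']; exact IsJM.sup ih1 ih2

lemma IsJM.mul {P : Set α} {r s : α} (hr : IsJM P r) (hs : IsJM P s) :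
    IsJM P (r * s) := by
  induction hr with
  | mix hy hm => exact (hs.mul_left ((‹_ ≤ absv _›).trans (absv_le_one _)) : IsJM P _)
  | sup h1 h2 ih1 ih2 => rw [sup_mul']; exact IsJM.sup ih1 ih2

lemma IsJM.not_mem (hec : ECyclic α) {P : Set α} (hP : IsPrimeConvex P)
    {r : α} (h : IsJM P r) : r ∉ P := by
  induction h with
  | mix hy hm =>
    intro hmem
    exact hy (hP.1.mem_of_absv_mem
      (hP.1.convex hmem hP.1.one_mem hm (absv_le_one _)))
  | sup h1 h2 ih1 ih2 =>
    intro hmem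
    rcases crit_of_prime hec hP h1.le_one h2.le_one hmem with h | h
    · exact ih1 h
    · exact ih2 h

end ResiduatedLattice

end Aux6
section Aux7

namespace ResiduatedLattice

variable {α : Type u} [ResiduatedLattice α]

/-- The generating set for the Zorn argument. -/
def piGen (P : Set α) (x : α) : Set α :=
  {w | w = absv x ∨ ∃ y, y ∉ P ∧ w = absv y}

lemma piGen_le_one {P : Set α} {x : α} {g : α} (hg : g ∈ piGen P x) : g ≤ 1 := by
  rcases hg with rfl | ⟨y, -, rfl⟩ <;> exact absv_le_one _

lemma inPi_le_one {P : Set α} {x : α} {s : α} (h : InPi (piGen P x) s) : s ≤ 1 := by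
  induction h with
  | base hg => exact piGen_le_one hg
  | mul _ _ ih1 ih2 => exact mul_le_one' ih1 ih2
  | sup _ _ ih1 ih2 => exact sup_le ih1 ih2

lemma inPi_decomp {P : Set α} (hP' : P ≠ Set.univ) {x s : α}
    (h : InPi (piGen P x) s) :
    ∃ q r, q ≤ absv x ∧ IsJM P r ∧ s ≤ q ⊔ r := by
  obtain ⟨y0, hy0⟩ := Set.ne_univ_iff_exists_notMem P |>.mp hP'
  induction h with
  | base hg =>
    rcases hg with rfl | ⟨y, hy, rfl⟩
    · exact ⟨absv x, absv y0, le_rfl, IsJM.mix hy0 le_rfl, le_sup_left⟩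
    · exact ⟨absv x, absv y, le_rfl, IsJM.mix hy le_rfl, le_sup_right⟩
  | mul h1 h2 ih1 ih2 =>
    obtain ⟨q1, r1, hq1, hr1, hs1⟩ := ih1
    obtain ⟨q2, r2, hq2, hr2, hs2⟩ := ih2
    have hq1le : q1 ≤ 1 := hq1.trans (absv_le_one x)
    have hq2le : q2 ≤ 1 := hq2.trans (absv_le_one x)
    refine ⟨q1 * q2, q1 * r2 ⊔ (r1 * q2 ⊔ r1 * r2), ?_, ?_, ?_⟩
    · exact (mul_le_of_le_one_left hq1le).trans hq2
    · exact IsJM.sup (hr2.mul_left hq1le) (IsJM.sup (hr1.mul_right hq2le) (hr1.mul hr2))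
    · calc _ ≤ (q1 ⊔ r1) * (q2 ⊔ r2) := mul_le_mul'' hs1 hs2
        _ = q1 * q2 ⊔ q1 * r2 ⊔ (r1 * q2 ⊔ r1 * r2) := by
            rw [sup_mul', mul_sup', mul_sup']
        _ ≤ _ := by rw [sup_assoc]
  | sup h1 h2 ih1 ih2 =>
    obtain ⟨q1, r1, hq1, hr1, hs1⟩ := ih1
    obtain ⟨q2, r2, hq2, hr2, hs2⟩ := ih2
    refine ⟨q1 ⊔ q2, r1 ⊔ r2, sup_le hq1 hq2, IsJM.sup hr1 hr2, ?_⟩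
    calc _ ≤ (q1 ⊔ r1) ⊔ (q2 ⊔ r2) := sup_le_sup hs1 hs2
      _ ≤ _ := by
          apply sup_le <;> apply sup_le
          · exact le_sup_of_le_left le_sup_left
          · exact le_sup_of_le_right le_sup_left
          · exact le_sup_of_le_left le_sup_right
          · exact le_sup_of_le_right le_sup_right

lemma not_inPi_one (hec : ECyclic α) {P : Set α} (hP : IsPrimeConvex P)
    (hP' : P ≠ Set.univ) {x : α} (_hx : x ∈ P) (hpol : polar {x} ⊆ P) :
    ¬ InPi (piGen P x) 1 := by
  intro h
  obtain ⟨q, r, hq, hr, hs⟩ := inPi_decomp hP' h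
  have h1 : (1 : α) ≤ absv x ⊔ r := hs.trans (sup_le_sup_right hq r)
  have heq : absv x ⊔ r = 1 := le_antisymm (sup_le (absv_le_one x) hr.le_one) h1
  have h2 : (1 : α) ≤ absv r ⊔ absv x := by
    calc (1 : α) = (r ⊔ absv x) * (r ⊔ absv x) := by
          rw [sup_comm] at heq; rw [heq, one_mul]
      _ ≤ r * r ⊔ absv x := sup_mul_sup_le hr.le_one hr.le_one (absv_le_one x)
      _ ≤ absv r ⊔ absv x := sup_le_sup_right (sq_le_absv hr.le_one) _
  have hmem : r ∈ polar {x} := by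
    rw [mem_polar_singleton]
    exact le_antisymm (sup_le (absv_le_one r) (absv_le_one x)) h2
  exact hr.not_mem hec hP (hpol hmem)

end ResiduatedLattice

end Aux7
section Aux8

namespace ResiduatedLattice

variable {α : Type u} [ResiduatedLattice α]

lemma minimal_imp_polar (hec : ECyclic α) {P : Set α} (hmin : IsMinimalPrimeConvex P) :
    ∀ x ∈ P, ¬ polar {x} ⊆ P := by
  obtain ⟨hP, hP', hminimal⟩ := hmin
  intro x hx hpol
  set G : Set α := piGen P x with hG
  -- The family of convex subalgebras avoiding `InPi G`.
  set S : Set (Set α) := {H | IsConvexSubalgebra H ∧ ∀ z ∈ H, ¬ InPi G z} with hS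
  have hone : ({1} : Set α) ∈ S := by
    refine ⟨one_isConvex, ?_⟩
    intro z hz
    rw [Set.mem_singleton_iff] at hz
    subst hz
    exact not_inPi_one hec hP hP' hx hpol
  have hzorn : ∀ c ⊆ S, IsChain (· ⊆ ·) c → c.Nonempty →
      ∃ ub ∈ S, ∀ s ∈ c, s ⊆ ub := by
    intro c hcS hchain ⟨H0, hH0⟩
    have hpair : ∀ {a b : α}, a ∈ ⋃₀ c → b ∈ ⋃₀ c →
        ∃ H ∈ c, a ∈ H ∧ b ∈ H := by
      rintro a b ⟨H1, hH1, ha⟩ ⟨H2, hH2, hb⟩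
      rcases eq_or_ne H1 H2 with rfl | hne
      · exact ⟨H1, hH1, ha, hb⟩
      · rcases hchain hH1 hH2 hne with h | h
        · exact ⟨H2, hH2, h ha, hb⟩
        · exact ⟨H1, hH1, ha, h hb⟩
    refine ⟨⋃₀ c, ⟨?_, ?_⟩, fun s hs => Set.subset_sUnion_of_mem hs⟩
    · constructor
      · exact ⟨H0, hH0, (hcS hH0).1.one_mem⟩
      · intro a ha b hb
        obtain ⟨H, hH, ha', hb'⟩ := hpair ha hb
        exact ⟨H, hH, (hcS hH).1.mul_mem ha' hb'⟩
      · intro a ha b hb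
        obtain ⟨H, hH, ha', hb'⟩ := hpair ha hb
        exact ⟨H, hH, (hcS hH).1.sup_mem ha' hb'⟩
      · intro a ha b hb
        obtain ⟨H, hH, ha', hb'⟩ := hpair ha hb
        exact ⟨H, hH, (hcS hH).1.inf_mem ha' hb'⟩
      · intro a ha b hb
        obtain ⟨H, hH, ha', hb'⟩ := hpair ha hb
        exact ⟨H, hH, (hcS hH).1.ldiv_mem ha' hb'⟩
      · intro a ha b hb
        obtain ⟨H, hH, ha', hb'⟩ := hpair ha hb
        exact ⟨H, hH, (hcS hH).1.rdiv_mem ha' hb'⟩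
      · intro a ha b hb z h1 h2
        obtain ⟨H, hH, ha', hb'⟩ := hpair ha hb
        exact ⟨H, hH, (hcS hH).1.convex ha' hb' h1 h2⟩
    · rintro z ⟨H, hH, hzH⟩
      exact (hcS hH).2 z hzH
  obtain ⟨Q, hQ1, hQmax⟩ := zorn_subset_nonempty S hzorn {1} hone
  obtain ⟨hQc, hQdis⟩ := hQmax.prop
  -- `Q ⊆ P` and `x ∉ Q`
  have hQP : Q ⊆ P := by
    intro z hz
    by_contra hzP
    exact hQdis _ (hQc.absv_mem hz) (InPi.base (Or.inr ⟨z, hzP, rfl⟩))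
  have hxQ : x ∉ Q := by
    intro hxQ
    exact hQdis _ (hQc.absv_mem hxQ) (InPi.base (Or.inl rfl))
  -- the splitting criterion for `Q`
  have hcrit : ∀ u v : α, u ≤ 1 → v ≤ 1 → u ⊔ v ∈ Q → u ∈ Q ∨ v ∈ Q := by
    intro u v hu hv huv
    by_contra hcon
    push_neg at hcon
    obtain ⟨huQ, hvQ⟩ := hcon
    have hmeet : ∀ (w : α), w ≤ 1 → w ∉ Q → ∃ s, s ∈ genSub Q w ∧ InPi G s := by
      intro w hw hwQ
      by_contra hno
      push_neg at hno
      have hmem : genSub Q w ∈ S := ⟨genSub_isConvex hec hQc hw, hno⟩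
      exact hwQ (hQmax.2 hmem (subset_genSub hQc hw) (mem_genSub_self hQc hw))
    obtain ⟨s1, hs1mem, hs1pi⟩ := hmeet u hu huQ
    obtain ⟨s2, hs2mem, hs2pi⟩ := hmeet v hv hvQ
    obtain ⟨v1, hv1Q, hv1le, m, hm⟩ := hs1mem
    obtain ⟨v2, hv2Q, hv2le, n, hn⟩ := hs2mem
    set w : α := v1 * v2 with hwdef
    have hwQ : w ∈ Q := hQc.mul_mem hv1Q hv2Q
    have hwle : w ≤ 1 := mul_le_one' hv1le hv2le
    set A : α := w * u with hA
    set B : α := w * v with hB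
    have hAle : A ≤ 1 := mul_le_one' hwle hu
    have hBle : B ≤ 1 := mul_le_one' hwle hv
    have hAv1 : A ≤ v1 * u := by
      rw [hA, hwdef, mul_assoc]
      exact mul_le_mul_left' (mul_le_of_le_one_left hv2le) v1
    have hBv2 : B ≤ v2 * v := mul_le_mul_right' (mul_le_of_le_one_left hv1le) v
    set M : ℕ := m + n + 1 with hM
    have hAs1 : A ^ (M + 1) ≤ s1 := by
      calc A ^ (M + 1) ≤ A ^ (m + 1) :=
            pow_le_pow_of_le hAle (by omega)
        _ ≤ (v1 * u) ^ (m + 1) := pow_le_pow_left'' hAv1 _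
        _ ≤ absv s1 := hm
        _ ≤ s1 := absv_le_self s1
    have hBs2 : B ^ (M + 1) ≤ s2 := by
      calc B ^ (M + 1) ≤ B ^ (n + 1) :=
            pow_le_pow_of_le hBle (by omega)
        _ ≤ (v2 * v) ^ (n + 1) := pow_le_pow_left'' hBv2 _
        _ ≤ absv s2 := hn
        _ ≤ s2 := absv_le_self s2
    have hC : w * (u ⊔ v) = A ⊔ B := mul_sup' w u v
    have hCQ : w * (u ⊔ v) ∈ Q := hQc.mul_mem hwQ huv
    have hCpow : (w * (u ⊔ v)) ^ ((M + 1) + (M + 1)) ∈ Q := hQc.pow_mem hCQ _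
    have hCle : (w * (u ⊔ v)) ^ ((M + 1) + (M + 1)) ≤ s1 ⊔ s2 := by
      rw [hC]
      exact (sup_pow_le hAle hBle (M + 1) (M + 1)).trans (sup_le_sup hAs1 hBs2)
    have hsup_le_one : s1 ⊔ s2 ≤ 1 := sup_le (inPi_le_one hs1pi) (inPi_le_one hs2pi)
    have : s1 ⊔ s2 ∈ Q := hQc.convex hCpow hQc.one_mem hCle hsup_le_one
    exact hQdis _ this (InPi.sup hs1pi hs2pi)
  have hQprime : IsPrimeConvex Q := prime_of_crit hQc hcrit
  have hQne : Q ≠ Set.univ := by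
    intro h
    exact hxQ (h ▸ Set.mem_univ x)
  have := hminimal Q hQprime hQne hQP
  exact hxQ (this ▸ hx)

end ResiduatedLattice

end Aux8
/-- characterization of minimal prime convex subalgebras via polars. -/
theorem stmt12 {α : Type u} [ResiduatedLattice α] (hec : ECyclic α)
    (P : Set α) (hP : IsPrimeConvex P) (hP' : P ≠ Set.univ) :
    List.TFAE [
      IsMinimalPrimeConvex P,
      (∀ x ∈ P, ¬ polar {x} ⊆ P),
      P = ⋃ x ∈ Pᶜ, polar {x}] := by
  tfae_have 1 → 2 := fun h => minimal_imp_polar hec h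
  tfae_have 2 → 3 := by
    intro h2
    apply Set.Subset.antisymm
    · intro z hz
      obtain ⟨w, hw, hwP⟩ := Set.not_subset.mp (h2 z hz)
      exact Set.mem_biUnion (Set.mem_compl hwP) (polar_singleton_comm hw)
    · intro z hz
      simp only [Set.mem_iUnion, Set.mem_compl_iff] at hz
      obtain ⟨y, hy, hzy⟩ := hz
      exact polar_subset_of_prime hec hP hy hzy
  tfae_have 3 → 1 := by
    intro h3
    refine ⟨hP, hP', fun Q hQ hQne hQP => ?_⟩
    refine Set.Subset.antisymm hQP ?_
    intro z hz
    rw [h3] at hz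
    simp only [Set.mem_iUnion, Set.mem_compl_iff] at hz
    obtain ⟨y, hy, hzy⟩ := hz
    exact polar_subset_of_prime hec hQ (fun h => hy (hQP h)) hzy
  tfae_finish
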